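/- (Theorem 1.) Let L, c, f_co > 0 and θ ∈ (0, π/2), and define F̂(f) = f^{-2}·(L − (L³π²f²/(6c²))·(1 − f_co²/(2f²) − cos θ)²) for f > 0. Then f₁⁽¹⁾ = f_co² / √(12c²/(L²π²) + 2(1 − cos θ)·f_co²) is the unique global maximizer of F̂ on (0, ∞); that is, F̂(f) < F̂(f₁⁽¹⁾) for every f > 0 with f ≠ f₁⁽¹⁾. -/

import Mathlib

open Real

/-- The normalized signal-strength function
`F̂(f) = f⁻²·(L − (L³π²f²/(6c²))·(1 − f_co²/(2f²) − cos θ)²)`. -/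
noncomputable def Fhat (L c f_co θ : ℝ) (f : ℝ) : ℝ :=
  (L - (L ^ 3 * π ^ 2 * f ^ 2 / (6 * c ^ 2)) *
      (1 - f_co ^ 2 / (2 * f ^ 2) - Real.cos θ) ^ 2) / f ^ 2

/-- The critical point `f₁⁽¹⁾ = f_co² / √(12c²/(L²π²) + 2(1 − cos θ)·f_co²)`. -/
noncomputable def fOne (L c f_co θ : ℝ) : ℝ :=
  f_co ^ 2 / Real.sqrt (12 * c ^ 2 / (L ^ 2 * π ^ 2) + 2 * (1 - Real.cos θ) * f_co ^ 2)

/-- Auxiliary: exact gap identity for a concave quadratic at its critical point. -/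
lemma quad_gap (K b a Lr x x1 : ℝ)
    (h : 2 * K * b ^ 2 * x1 = Lr + 2 * K * a * b) :
    (Lr * x1 - K * (a - b * x1) ^ 2) - (Lr * x - K * (a - b * x) ^ 2) =
      K * b ^ 2 * (x - x1) ^ 2 := by
  linear_combination (x - x1) * h

/-- Theorem 1: `f₁⁽¹⁾` is the unique global maximizer of `F̂` on `(0, ∞)`:
`F̂(f) < F̂(f₁⁽¹⁾)` for every `f > 0` with `f ≠ f₁⁽¹⁾`. -/
theorem fOne_unique_global_maximizer (L c f_co θ : ℝ) (hL : 0 < L) (hc : 0 < c)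
    (hfco : 0 < f_co) (hθ : θ ∈ Set.Ioo 0 (π / 2)) :
    0 < fOne L c f_co θ ∧
      ∀ f : ℝ, 0 < f → f ≠ fOne L c f_co θ →
        Fhat L c f_co θ f < Fhat L c f_co θ (fOne L c f_co θ) := by
  obtain ⟨hθ0, hθ2⟩ := hθ
  have hπ : 0 < π := Real.pi_pos
  have hcos : Real.cos θ ≤ 1 := Real.cos_le_one θ
  have hs : 0 < 12 * c ^ 2 / (L ^ 2 * π ^ 2) + 2 * (1 - Real.cos θ) * f_co ^ 2 := by
    have h1 : 0 < 12 * c ^ 2 / (L ^ 2 * π ^ 2) := by positivity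
    nlinarith [sq_nonneg f_co]
  have hf1 : 0 < fOne L c f_co θ := by
    rw [fOne]
    exact div_pos (by positivity) (Real.sqrt_pos.mpr hs)
  refine ⟨hf1, fun f hf hne => ?_⟩
  have hf1sq : fOne L c f_co θ ^ 2 =
      f_co ^ 4 / (12 * c ^ 2 / (L ^ 2 * π ^ 2) + 2 * (1 - Real.cos θ) * f_co ^ 2) := by
    rw [fOne, div_pow, Real.sq_sqrt hs.le]; ring_nf
  have hFhat : ∀ g : ℝ, g ≠ 0 →
      Fhat L c f_co θ g = L * (1 / g ^ 2) -
        (L ^ 3 * π ^ 2 / (6 * c ^ 2)) *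
          ((1 - Real.cos θ) - (f_co ^ 2 / 2) * (1 / g ^ 2)) ^ 2 := by
    intro g hg
    unfold Fhat
    field_simp
    ring
  have hx1 : (1 : ℝ) / fOne L c f_co θ ^ 2 =
      (12 * c ^ 2 / (L ^ 2 * π ^ 2) + 2 * (1 - Real.cos θ) * f_co ^ 2) / f_co ^ 4 := by
    rw [hf1sq, one_div_div]
  have hcrit : 2 * (L ^ 3 * π ^ 2 / (6 * c ^ 2)) * (f_co ^ 2 / 2) ^ 2 *
      (1 / fOne L c f_co θ ^ 2) =
      L + 2 * (L ^ 3 * π ^ 2 / (6 * c ^ 2)) * (1 - Real.cos θ) * (f_co ^ 2 / 2) := by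
    rw [hx1]
    field_simp
    ring
  have key := quad_gap (L ^ 3 * π ^ 2 / (6 * c ^ 2)) (f_co ^ 2 / 2) (1 - Real.cos θ) L
    (1 / f ^ 2) (1 / fOne L c f_co θ ^ 2) hcrit
  rw [← hFhat f hf.ne', ← hFhat _ hf1.ne'] at key
  have hxne : 1 / f ^ 2 - 1 / fOne L c f_co θ ^ 2 ≠ 0 := by
    intro h
    apply hne
    have h3 := sub_eq_zero.mp h
    field_simp at h3
    exact (pow_left_inj₀ hf.le hf1.le two_ne_zero).mp h3.symm
  have hpos : 0 < (L ^ 3 * π ^ 2 / (6 * c ^ 2)) * (f_co ^ 2 / 2) ^ 2 *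
      (1 / f ^ 2 - 1 / fOne L c f_co θ ^ 2) ^ 2 := by positivity
  linarith
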